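/- Let F_q ⊆ F_{q^a} be an extension of finite fields of odd characteristic, with primitive element x generating F_{q^a} over F_q. The discriminant of the trace form Tr_{F_{q^a}/F_q}(⟨1⟩) is a square in F_q if and only if a is odd. -/

import Mathlib

private lemma aux_sign_mulLeft {G : Type*} [Group G] [Fintype G] [DecidableEq G] {g : G}
    (hg : orderOf g = Fintype.card G) :
    Equiv.Perm.sign (Equiv.mulLeft g) = (-1) ^ (Fintype.card G - 1) := by
  rcases eq_or_ne g 1 with rfl | hg1
  · rw [Equiv.mulLeft_one]
    rw [orderOf_one] at hg
    simp [← hg]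
  · have hzp : ∀ τ : G, ∃ k : ℤ, g ^ k = τ := by
      have h1 : Subgroup.zpowers g = ⊤ := by
        apply Subgroup.eq_top_of_card_eq
        rw [Nat.card_zpowers, hg, Nat.card_eq_fintype_card]
      intro τ
      have := h1 ▸ Subgroup.mem_top τ
      exact Subgroup.mem_zpowers_iff.mp this
    have hcycle : (Equiv.mulLeft g).IsCycle := by
      refine ⟨1, by simpa using hg1, ?_⟩
      intro τ _
      obtain ⟨k, hk⟩ := hzp τ
      exact ⟨k, by simp [Equiv.zpow_mulLeft, hk]⟩
    have hsupp : (Equiv.mulLeft g).support = Finset.univ := by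
      ext τ
      simp only [Equiv.Perm.mem_support, Finset.mem_univ, iff_true]
      simp only [Equiv.coe_mulLeft]
      intro h
      exact hg1 (by simpa using mul_right_cancel (h.trans (one_mul τ).symm))
    rw [hcycle.sign, hsupp, Finset.card_univ]
    have hpos : 1 ≤ Fintype.card G := Fintype.card_pos
    rw [← Nat.sub_add_cancel hpos, pow_succ]
    simp

open Polynomial

/-- Let `F ⊆ K` be an extension of finite fields of odd characteristic with a primitive
element `x` (so `K = F(x)`).  The discriminant of the trace form `Tr_{K/F}(⟨1⟩)`, i.e.
the determinant of the Gram matrix `(Tr_{K/F}(bᵢ bⱼ))` in any `F`-basis `b` of `K`,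
is a square in `F` iff the degree `a = [K : F]` is odd. -/
theorem stmt6 (F K : Type) [Field F] [Field K] [Fintype F] [Fintype K] [Algebra F K]
    (hodd : ringChar F ≠ 2) (x : K) (hx : Algebra.adjoin F ({x} : Set K) = ⊤)
    (ι : Type) [Fintype ι] [DecidableEq ι] (b : Module.Basis ι F K) :
    IsSquare (Matrix.det (Matrix.of fun i j : ι => Algebra.trace F K (b i * b j))) ↔
      Odd (Module.finrank F K) := by
  classical
  haveI : FiniteDimensional F K := Module.Finite.of_basis b
  set q := Fintype.card F with hq
  set n := Module.finrank F K with hn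
  set d := Matrix.det (Matrix.of fun i j : ι => Algebra.trace F K (b i * b j)) with hd
  -- the determinant is the discriminant of the basis, hence nonzero
  have hd_discr : d = Algebra.discr F b := by
    rw [Algebra.discr_def]
    congr 1
  have hdne : d ≠ 0 := by
    rw [hd_discr]
    exact Algebra.discr_not_zero_of_basis F b
  -- characteristic and cardinalities
  obtain ⟨p, hpF⟩ := CharP.exists F
  haveI : CharP F p := hpF
  haveI : CharP K p := charP_of_injective_algebraMap' F (A := K) p
  obtain ⟨m, hprime, hcard⟩ := FiniteField.card F p
  haveI : Fact p.Prime := ⟨hprime⟩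
  have hq2 : 2 ≤ q := Fintype.one_lt_card
  have hcardK : Fintype.card K = q ^ n := Module.card_eq_pow_finrank
  -- the Frobenius x ↦ x ^ q as an F-algebra automorphism of K
  have hmapadd : ∀ u v : K, (u + v) ^ q = u ^ q + v ^ q := by
    intro u v; rw [hq, hcard]; exact add_pow_char_pow u v p m
  let φ0 : K →+* K :=
    { toFun := fun y => y ^ q
      map_one' := one_pow q
      map_mul' := fun u v => mul_pow u v q
      map_zero' := zero_pow (Fintype.card_ne_zero)
      map_add' := hmapadd }
  let φ1 : K →ₐ[F] K :=
    { toRingHom := φ0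
      commutes' := fun a => by
        show (algebraMap F K a) ^ q = algebraMap F K a
        rw [← map_pow, FiniteField.pow_card] }
  let φ : K ≃ₐ[F] K := AlgEquiv.ofBijective φ1
    ((Finite.injective_iff_bijective).mp (φ1.toRingHom.injective))
  have hφ : ∀ y : K, φ y = y ^ q := fun y => rfl
  have hφpow : ∀ (k : ℕ) (y : K), (φ ^ k) y = y ^ q ^ k := by
    intro k
    induction k with
    | zero => intro y; simp
    | succ k ih =>
      intro y
      rw [pow_succ, AlgEquiv.mul_apply, hφ, ih, ← pow_mul, ← pow_succ']
  have hφn : φ ^ n = 1 := by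
    ext y
    rw [hφpow, ← hcardK]
    exact FiniteField.pow_card y
  have horder : orderOf φ = n := by
    have hdvd : orderOf φ ∣ n := orderOf_dvd_of_pow_eq_one hφn
    rcases Nat.lt_or_ge (orderOf φ) n with hlt | hge
    · exfalso
      set d' := orderOf φ with hd'
      have hd0 : 0 < d' := orderOf_pos φ
      have hroot : ∀ y : K, y ^ q ^ d' = y := by
        intro y
        calc y ^ q ^ d' = (φ ^ d') y := (hφpow d' y).symm
        _ = y := by rw [pow_orderOf_eq_one φ]; rfl
      set f : K[X] := X ^ q ^ d' - X with hf
      have h2 : 2 ≤ q ^ d' := le_trans hq2 (Nat.le_self_pow hd0.ne' q)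
      have hdeg : f.natDegree = q ^ d' := by
        rw [hf, natDegree_sub_eq_left_of_natDegree_lt]
        · exact natDegree_X_pow _
        · rw [natDegree_X_pow, natDegree_X]; exact h2
      have hfne : f ≠ 0 := by
        intro h
        rw [h, natDegree_zero] at hdeg
        omega
      have hsub : (Finset.univ : Finset K) ⊆ f.roots.toFinset := by
        intro y _
        rw [Multiset.mem_toFinset, mem_roots hfne]
        simp [hf, hroot y, sub_eq_zero]
      have hle : Fintype.card K ≤ q ^ d' := by
        calc Fintype.card K = (Finset.univ : Finset K).card := Finset.card_univ.symm
        _ ≤ f.roots.toFinset.card := Finset.card_le_card hsub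
        _ ≤ Multiset.card f.roots := f.roots.toFinset_card_le
        _ ≤ f.natDegree := f.card_roots'
        _ = q ^ d' := hdeg
      rw [hcardK] at hle
      have hnd : n ≤ d' := (pow_le_pow_iff_right₀ hq2).mp hle
      omega
    · exact le_antisymm (Nat.le_of_dvd (by
        have : 0 < n := Module.finrank_pos
        omega) hdvd) hge
  -- the Gram matrix factors over K as A * Aᵀ
  have hcardG : Fintype.card (K ≃ₐ[F] K) = n := by rw [← Nat.card_eq_fintype_card]; exact IsGalois.card_aut_eq_finrank F K
  have hcardι : Fintype.card ι = n := (Module.finrank_eq_card_basis b).symm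
  let e : (K ≃ₐ[F] K) ≃ ι := Fintype.equivOfCardEq (by rw [hcardG, hcardι])
  let A : Matrix ι ι K := Matrix.of fun i j => (e.symm j) (b i)
  have hAA : (Matrix.of fun i j : ι => Algebra.trace F K (b i * b j)).map (algebraMap F K)
      = A * A.transpose := by
    ext i j
    simp only [Matrix.map_apply, Matrix.mul_apply, Matrix.of_apply, Matrix.transpose_apply, A]
    rw [trace_eq_sum_automorphisms]
    simp_rw [map_mul]
    exact (Equiv.sum_comp e.symm (fun σ : K ≃ₐ[F] K => σ (b i) * σ (b j))).symm
  set D := Matrix.det A with hD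
  have hDD : algebraMap F K d = D ^ 2 := by
    rw [hd, RingHom.map_det, RingHom.mapMatrix_apply, hAA, Matrix.det_mul, Matrix.det_transpose, sq]
  have hDne : D ≠ 0 := by
    intro h
    apply hdne
    have : algebraMap F K d = 0 := by rw [hDD, h]; ring
    exact (_root_.map_eq_zero _).mp this
  -- Frobenius permutes the columns of A by an n-cycle
  let τ : Equiv.Perm ι := e.permCongr (Equiv.mulLeft φ)
  have hsign : Equiv.Perm.sign τ = (-1) ^ (n - 1) := by
    have h1 := Equiv.Perm.sign_permCongr e (Equiv.mulLeft φ)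
    have h2 := aux_sign_mulLeft (horder.trans hcardG.symm)
    rw [show τ = e.permCongr (Equiv.mulLeft φ) from rfl, h1, h2, hcardG]
  have hAmap : A.map φ0 = A.submatrix id τ := by
    ext i j
    simp only [Matrix.map_apply, Matrix.submatrix_apply, id_eq, Matrix.of_apply, A]
    have hτ : e.symm (τ j) = φ * e.symm j := by
      simp [τ, Equiv.permCongr_apply]
    rw [hτ, AlgEquiv.mul_apply, hφ]
    rfl
  have hDq : D ^ q = (-1 : K) ^ (n - 1) * D := by
    have h1 : D ^ q = φ0 D := rfl
    rw [h1, hD, RingHom.map_det, RingHom.mapMatrix_apply, hAmap, Matrix.det_permute' τ A, hsign]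
    push_cast
    ring
  -- conclude via Euler's criterion
  have hp2 : p ≠ 2 := by
    have hrc : ringChar F = p := ringChar.eq F p
    rw [hrc] at hodd
    exact hodd
  have hqodd : q % 2 = 1 := by
    have hop : Odd p := hprime.odd_of_ne_two hp2
    have hoq : Odd q := by rw [hq, hcard]; exact hop.pow
    exact Nat.odd_iff.mp hoq
  have hq12 : 2 * (q / 2) = q - 1 := by omega
  have hD1 : D ^ (q - 1) = (-1 : K) ^ (n - 1) := by
    have hstep : D ^ (q - 1) * D = (-1 : K) ^ (n - 1) * D := by
      rw [← hDq, ← pow_succ]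
      congr 1
      omega
    exact mul_right_cancel₀ hDne hstep
  have key : d ^ (q / 2) = (-1 : F) ^ (n - 1) := by
    apply (algebraMap F K).injective
    have h1 : (algebraMap F K) (d ^ (q / 2)) = (-1 : K) ^ (n - 1) := by
      rw [map_pow, hDD, ← pow_mul, hq12, hD1]
    rw [h1, map_pow, map_neg, map_one]
  rw [FiniteField.isSquare_iff hodd hdne, key]
  have hne : (-1 : F) ≠ 1 := by
    intro h
    have h2 : (2 : F) = 0 := by linear_combination -h
    have h3 : ((2 : ℕ) : F) = 0 := by exact_mod_cast h2
    have h4 : p ∣ 2 := (CharP.cast_eq_zero_iff F p 2).mp h3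
    exact hp2 ((Nat.prime_dvd_prime_iff_eq hprime Nat.prime_two).mp h4)
  rw [neg_one_pow_eq_one_iff_even hne]
  have hn1 : 0 < n := Module.finrank_pos
  constructor
  · intro h
    rw [Nat.even_iff] at h
    rw [Nat.odd_iff]
    omega
  · intro h
    rw [Nat.odd_iff] at h
    rw [Nat.even_iff]
    omega
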